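/- Let d be a positive integer and let k be an integer with d ≤ k ≤ 2d. The k-rainbow domination number of the complete bipartite graph K_{d,d} equals k, that is, γ_rk(K_{d,d}) = k = k·n/(2d) where n = 2d is the order of K_{d,d}. -/

import Mathlib

open SimpleGraph Finset

/-- `f` is a `k`-rainbow dominating function on `G`: every vertex with empty color set
has, for each color, a neighbour carrying that color. -/
def IsKRDF {V : Type*} (G : SimpleGraph V) (k : ℕ) (f : V → Finset (Fin k)) : Prop :=
  ∀ v : V, f v = ∅ → ∀ i : Fin k, ∃ u : V, G.Adj v u ∧ i ∈ f u

/-- The weight of a rainbow coloring function. -/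
def rdfWeight {V : Type*} [Fintype V] {k : ℕ} (f : V → Finset (Fin k)) : ℕ :=
  ∑ v : V, (f v).card

/-- The `k`-rainbow domination number of `G`: the minimum weight of a `k`-RDF. -/
noncomputable def rainbowDomNum {V : Type*} [Fintype V] (G : SimpleGraph V) (k : ℕ) : ℕ :=
  sInf {w : ℕ | ∃ f : V → Finset (Fin k), IsKRDF G k f ∧ rdfWeight f = w}

/-- For `d ≥ 1` and `d ≤ k ≤ 2d`, the complete bipartite graph `K_{d,d}`
(of order `n = 2d`) satisfies `γ_rk(K_{d,d}) = k = k·n/(2d)`. -/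
theorem stmt_11 (d k : ℕ) (hd : 0 < d) (hk1 : d ≤ k) (hk2 : k ≤ 2 * d) :
    rainbowDomNum (completeBipartiteGraph (Fin d) (Fin d)) k = k ∧
    2 * d * rainbowDomNum (completeBipartiteGraph (Fin d) (Fin d)) k
      = k * Fintype.card (Fin d ⊕ Fin d) := by
  set G := completeBipartiteGraph (Fin d) (Fin d) with hG
  set S := {w : ℕ | ∃ f : Fin d ⊕ Fin d → Finset (Fin k), IsKRDF G k f ∧ rdfWeight f = w}
    with hS
  have hmem : k ∈ S := by
    refine ⟨fun v => Sum.elim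
      (fun a => univ.filter fun i : Fin k => i.val % d = a.val) (fun _ => ∅) v, ?_, ?_⟩
    · intro v hv i
      match v with
      | Sum.inl a =>
        exfalso
        have hmem : (⟨a.val, lt_of_lt_of_le a.isLt hk1⟩ : Fin k) ∈
            (univ.filter fun i : Fin k => i.val % d = a.val) := by
          simp [Nat.mod_eq_of_lt a.isLt]
        simp only [Sum.elim_inl] at hv
        simp [hv] at hmem
      | Sum.inr b =>
        refine ⟨Sum.inl ⟨i.val % d, Nat.mod_lt _ hd⟩, ?_, ?_⟩
        · simp [hG]
        · simp
    · unfold rdfWeight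
      rw [Fintype.sum_sum_type]
      simp only [Sum.elim_inl, Sum.elim_inr, Finset.card_empty, Finset.sum_const_zero, add_zero]
      have := Finset.card_eq_sum_card_fiberwise
        (f := fun i : Fin k => (⟨i.val % d, Nat.mod_lt _ hd⟩ : Fin d))
        (s := (univ : Finset (Fin k))) (t := (univ : Finset (Fin d)))
        (fun x _ => mem_univ _)
      simp only [card_univ, Fintype.card_fin] at this
      conv_rhs => rw [this]
      refine Finset.sum_congr rfl fun a _ => ?_
      have heq : (univ.filter fun i : Fin k => i.val % d = a.val) =
          (univ.filter fun i : Fin k => (⟨i.val % d, Nat.mod_lt _ hd⟩ : Fin d) = a) := by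
        ext i
        simp [Fin.ext_iff]
      rw [heq]
  have hlb : ∀ w ∈ S, k ≤ w := by
    rintro w ⟨f, hf, rfl⟩
    classical
    unfold rdfWeight
    by_cases he : ∃ v, f v = ∅
    · obtain ⟨v, hv⟩ := he
      have hsub : (univ : Finset (Fin k)) ⊆ (univ.filter (fun u => G.Adj v u)).biUnion f := by
        intro i _
        obtain ⟨u, hadj, hi⟩ := hf v hv i
        exact mem_biUnion.mpr ⟨u, by simp [hadj], hi⟩
      calc k = (univ : Finset (Fin k)).card := by simp
        _ ≤ ((univ.filter (fun u => G.Adj v u)).biUnion f).card := card_le_card hsub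
        _ ≤ ∑ u ∈ univ.filter (fun u => G.Adj v u), (f u).card := card_biUnion_le
        _ ≤ ∑ u : Fin d ⊕ Fin d, (f u).card := sum_le_sum_of_subset (filter_subset _ _)
    · push_neg at he
      calc k ≤ 2 * d := hk2
        _ = Fintype.card (Fin d ⊕ Fin d) := by simp [two_mul]
        _ = ∑ _u : Fin d ⊕ Fin d, 1 := by simp
        _ ≤ ∑ u : Fin d ⊕ Fin d, (f u).card := sum_le_sum fun u _ =>
            Finset.card_pos.mpr (he u)
  have hinf : rainbowDomNum G k = k := by
    unfold rainbowDomNum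
    exact le_antisymm (Nat.sInf_le hmem) (le_csInf ⟨k, hmem⟩ hlb)
  refine ⟨hinf, ?_⟩
  rw [hinf]
  simp [two_mul]
  ring
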